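/- (Unisolvence of the edge degrees of freedom: endpoint derivatives plus interior moments.) Let m ≥ 1 and r ≥ 2m − 1 be integers and let a < b be real numbers. If a real polynomial p of degree at most r satisfies p^{(j)}(a) = 0 and p^{(j)}(b) = 0 for all j = 0, …, m − 1, and ∫_a^b p(x) x^i dx = 0 for all i = 0, …, r − 2m, then p = 0. Consequently, a polynomial of degree at most r is uniquely determined by these r + 1 = 2m + (r − 2m + 1) values. -/

import Mathlib

open MeasureTheory

open Polynomial in
private lemma edge_aux (m r : ℕ) (hm : 1 ≤ m) (a b : ℝ) (hab : a < b)
    (p : Polynomial ℝ) (hdeg : p.degree ≤ (r : ℕ))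
    (hend : ∀ j < m, (derivative^[j] p).eval a = 0 ∧ (derivative^[j] p).eval b = 0)
    (hmom : ∀ i < r + 1 - 2 * m, ∫ x in a..b, p.eval x * x ^ i = 0) : p = 0 := by
  by_contra hp
  -- endpoint conditions give divisibility by (X - a)^m and (X - b)^m
  have hfac : ∀ t : ℝ, (∀ j < m, (derivative^[j] p).eval t = 0) → (X - C t) ^ m ∣ p := by
    intro t ht
    have hlt : m - 1 < p.rootMultiplicity t := by
      refine lt_rootMultiplicity_of_isRoot_iterate_derivative_of_mem_nonZeroDivisors hp
        (fun k hk => ht k (by omega)) ?_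
      exact mem_nonZeroDivisors_of_ne_zero
        (by exact_mod_cast (Nat.factorial_pos (m - 1)).ne')
    exact dvd_trans (pow_dvd_pow _ (by omega)) (p.pow_rootMultiplicity_dvd t)
  have hcop : IsCoprime ((X - C a) ^ m) ((X - C b) ^ m : ℝ[X]) :=
    (isCoprime_X_sub_C_of_isUnit_sub (isUnit_iff_ne_zero.2 (sub_ne_zero.2 hab.ne))).pow
  obtain ⟨q, hq⟩ := hcop.mul_dvd (hfac a fun j hj => (hend j hj).1)
    (hfac b fun j hj => (hend j hj).2)
  have hq0 : q ≠ 0 := by rintro rfl; simp [hq] at hp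
  -- degree bookkeeping
  have hmono : ((X - C a) ^ m * (X - C b) ^ m : ℝ[X]) ≠ 0 :=
    (((monic_X_sub_C a).pow m).mul ((monic_X_sub_C b).pow m)).ne_zero
  have hnd : p.natDegree = 2 * m + q.natDegree := by
    rw [hq, natDegree_mul hmono hq0, natDegree_mul (pow_ne_zero _ (X_sub_C_ne_zero a))
      (pow_ne_zero _ (X_sub_C_ne_zero b))]
    simp only [natDegree_pow, natDegree_X_sub_C, mul_one]
    ring
  have hpr : p.natDegree ≤ r := natDegree_le_iff_degree_le.mpr hdeg
  -- moments against q vanish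
  have key : ∫ x in a..b, p.eval x * q.eval x = 0 := by
    have hx : ∀ x : ℝ, p.eval x * q.eval x =
        ∑ i ∈ Finset.range (q.natDegree + 1), q.coeff i * (p.eval x * x ^ i) := by
      intro x
      rw [eval_eq_sum_range (p := q) x, Finset.mul_sum]
      exact Finset.sum_congr rfl fun i _ => by ring
    simp only [hx]
    rw [intervalIntegral.integral_finset_sum]
    · refine Finset.sum_eq_zero fun i hi => ?_
      rw [intervalIntegral.integral_const_mul,
        hmom i (by have := Finset.mem_range.mp hi; omega), mul_zero]
    · intro i _
      exact (Continuous.mul (by continuity) (by fun_prop)).intervalIntegrable _ _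
  -- rewrite as a nonnegative integrand
  have heval : ∀ x : ℝ, p.eval x * q.eval x =
      (-1 : ℝ) ^ m * ((x - a) ^ m * (b - x) ^ m * q.eval x ^ 2) := by
    intro x
    rw [hq]
    simp only [eval_mul, eval_pow, eval_sub, eval_X, eval_C]
    rw [show x - b = -(b - x) by ring, neg_pow]
    ring
  have hg0 : ∫ x in a..b, (x - a) ^ m * (b - x) ^ m * q.eval x ^ 2 = 0 := by
    simp only [heval] at key
    rw [intervalIntegral.integral_const_mul, mul_eq_zero] at key
    rcases key with h | h
    · exact absurd h (pow_ne_zero _ (by norm_num))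
    · exact h
  rw [intervalIntegral.integral_of_le hab.le] at hg0
  have hgcont : Continuous fun x : ℝ => (x - a) ^ m * (b - x) ^ m * q.eval x ^ 2 := by
    fun_prop
  have hgint : IntegrableOn (fun x : ℝ => (x - a) ^ m * (b - x) ^ m * q.eval x ^ 2)
      (Set.Ioc a b) volume := hgcont.integrableOn_Ioc
  have hnn : 0 ≤ᵐ[volume.restrict (Set.Ioc a b)]
      fun x : ℝ => (x - a) ^ m * (b - x) ^ m * q.eval x ^ 2 := by
    rw [Filter.EventuallyLE, ae_restrict_iff' measurableSet_Ioc]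
    filter_upwards with x hx
    have h1 : (0:ℝ) ≤ (x - a) ^ m := pow_nonneg (by linarith [hx.1]) m
    have h2 : (0:ℝ) ≤ (b - x) ^ m := pow_nonneg (by linarith [hx.2]) m
    exact mul_nonneg (mul_nonneg h1 h2) (sq_nonneg _)
  have hzero := (integral_eq_zero_iff_of_nonneg_ae hnn hgint).mp hg0
  rw [Filter.EventuallyEq, ae_restrict_iff' measurableSet_Ioc] at hzero
  simp only [Pi.zero_apply] at hzero
  rw [ae_iff] at hzero
  have hsub : Set.Ioo a b ⊆
      {x : ℝ | ¬(x ∈ Set.Ioc a b → (x - a) ^ m * (b - x) ^ m * q.eval x ^ 2 = 0)}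
        ∪ {x | q.IsRoot x} := by
    intro x hx
    by_cases hqx : q.eval x = 0
    · exact Or.inr hqx
    · refine Or.inl fun h => ?_
      have hgx := h ⟨hx.1, hx.2.le⟩
      have h1 : (0:ℝ) < x - a := by linarith [hx.1]
      have h2 : (0:ℝ) < b - x := by linarith [hx.2]
      have h3 : (0:ℝ) < q.eval x ^ 2 := pow_two_pos_of_ne_zero hqx
      exact absurd hgx (mul_pos (mul_pos (pow_pos h1 m) (pow_pos h2 m)) h3).ne'
  have hfin : volume {x : ℝ | q.IsRoot x} = 0 :=
    (q.finite_setOf_isRoot hq0).measure_zero volume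
  have h0 : volume (Set.Ioo a b) = 0 :=
    measure_mono_null hsub (measure_union_null hzero hfin)
  rw [Real.volume_Ioo] at h0
  exact absurd h0 (by simp [ENNReal.ofReal_eq_zero]; linarith)

theorem edge_dofs_unisolvent
    (m r : ℕ) (hm : 1 ≤ m) (hr : 2 * m - 1 ≤ r) (a b : ℝ) (hab : a < b) :
    (∀ p : Polynomial ℝ, p.degree ≤ (r : ℕ) →
      (∀ j < m, (Polynomial.derivative^[j] p).eval a = 0 ∧
                (Polynomial.derivative^[j] p).eval b = 0) →
      (∀ i < r + 1 - 2 * m, ∫ x in a..b, p.eval x * x ^ i = 0) →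
      p = 0) ∧
    (∀ p q : Polynomial ℝ, p.degree ≤ (r : ℕ) → q.degree ≤ (r : ℕ) →
      (∀ j < m, (Polynomial.derivative^[j] p).eval a = (Polynomial.derivative^[j] q).eval a ∧
                (Polynomial.derivative^[j] p).eval b = (Polynomial.derivative^[j] q).eval b) →
      (∀ i < r + 1 - 2 * m,
        (∫ x in a..b, p.eval x * x ^ i) = ∫ x in a..b, q.eval x * x ^ i) →
      p = q) := by
  constructor
  · exact fun p hd he hi => edge_aux m r hm a b hab p hd he hi
  · intro p q hdp hdq he hi
    have := edge_aux m r hm a b hab (p - q)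
      (le_trans (Polynomial.degree_sub_le p q) (max_le hdp hdq))
      (fun j hj => by
        rw [Polynomial.iterate_derivative_sub, Polynomial.eval_sub, Polynomial.eval_sub,
          (he j hj).1, (he j hj).2]
        simp)
      (fun i hi' => by
        have h1 : (fun x : ℝ => (p - q).eval x * x ^ i) =
            fun x : ℝ => p.eval x * x ^ i - q.eval x * x ^ i := by
          funext x; rw [Polynomial.eval_sub]; ring
        rw [h1, intervalIntegral.integral_sub
          ((by fun_prop : Continuous fun x : ℝ => p.eval x * x ^ i).intervalIntegrable _ _)
          ((by fun_prop : Continuous fun x : ℝ => q.eval x * x ^ i).intervalIntegrable _ _),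
          hi i hi', sub_self])
    exact sub_eq_zero.mp this
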